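/- arXiv:2402.01055 — 4 statements merged into one kernel-verified Lean document; each statement's English description precedes it below -/
import Mathlib

section
/- Let T be an invertible column-stochastic noise matrix, L ∈ R^{n×n} a loss matrix, and L' = (Tᵀ)^{-1} L. Then any classifier h* that is Bayes optimal for the linear performance measure C ↦ ⟨L', C⟩ over the set of feasible noisy confusion matrices C_{D̃} is also Bayes optimal for C ↦ ⟨L, C⟩ over the set of feasible clean confusion matrices C_D. That is, if ⟨L', C^{D̃}[h*]⟩ = inf_{C̃ ∈ C_{D̃}} ⟨L', C̃⟩, then ⟨L, C^D[h*]⟩ = inf_{C ∈ C_D} ⟨L, C⟩. -/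
/-- Frobenius inner product of matrices. -/
def frob {n : ℕ} (A B : Matrix (Fin n) (Fin n) ℝ) : ℝ := ∑ i, ∑ j, A i j * B i j

/-- Any classifier Bayes optimal for the noise-corrected loss `L' = (T.transpose)⁻¹ L` w.r.t. the
noisy distribution is also Bayes optimal for `L` w.r.t. the clean distribution. -/
theorem noise_corrected_loss_bayes_optimal
    {n : ℕ} {H : Type*} (T L : Matrix (Fin n) (Fin n) ℝ)
    (hT : IsUnit T.det)
    -- column stochastic with entries in [0,1]
    (hTnn : ∀ i j, 0 ≤ T i j ∧ T i j ≤ 1) (hTcol : ∀ j, ∑ i, T i j = 1)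
    -- clean and noisy confusion matrices of each (randomized) classifier, CCN relation
    (Cclean Cnoisy : H → Matrix (Fin n) (Fin n) ℝ)
    (hrel : ∀ h, Cnoisy h = T * Cclean h)
    (hstar : H)
    -- h* is Bayes optimal for L' = (T.transpose)⁻¹ L w.r.t. the noisy distribution
    (hopt : frob ((T.transpose)⁻¹ * L) (Cnoisy hstar)
      = sInf ((fun C => frob ((T.transpose)⁻¹ * L) C) '' Set.range Cnoisy)) :
    frob L (Cclean hstar) = sInf ((fun C => frob L C) '' Set.range Cclean) := by
  have key : ∀ h, frob ((T.transpose)⁻¹ * L) (Cnoisy h) = frob L (Cclean h) := by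
    intro h
    rw [hrel h]
    have htr : ∀ (A B : Matrix (Fin n) (Fin n) ℝ),
        frob A B = Matrix.trace (A.transpose * B) := by
      intro A B
      simp only [frob, Matrix.trace, Matrix.diag, Matrix.mul_apply,
        Matrix.transpose_apply]
      rw [Finset.sum_comm]
    have hmove : ∀ (A C : Matrix (Fin n) (Fin n) ℝ),
        frob A (T * C) = frob (T.transpose * A) C := by
      intro A C
      rw [htr, htr, Matrix.transpose_mul, Matrix.transpose_transpose,
        Matrix.mul_assoc]
    rw [hmove]
    have hTt : IsUnit (T.transpose).det := by rwa [Matrix.det_transpose]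
    rw [← Matrix.mul_assoc, Matrix.mul_nonsing_inv _ hTt, Matrix.one_mul]
  have himg : ((fun C => frob ((T.transpose)⁻¹ * L) C) '' Set.range Cnoisy)
      = ((fun C => frob L C) '' Set.range Cclean) := by
    rw [← Set.range_comp, ← Set.range_comp]
    exact congrArg Set.range (funext key)
  rw [← key hstar, hopt, himg]
end

section
/- Let ψ(C) = ⟨A, C⟩ / ⟨B, C⟩ be a ratio-of-linear performance measure with ⟨B, C⟩ > 0 for all C ∈ C_D, and define the noise-corrected measure ψ̃ = ψ ∘ T^{-1}. Then for every C̃ ∈ C_{D̃}: (i) ψ̃(C̃) = ⟨(Tᵀ)^{-1}A, C̃⟩ / ⟨(Tᵀ)^{-1}B, C̃⟩ with denominator ⟨(Tᵀ)^{-1}B, C̃⟩ > 0, and (ii) any classifier h* achieving inf_{C̃ ∈ C_{D̃}} ψ̃(C̃) also achieves inf_{C ∈ C_D} ψ(C), i.e., ψ(C^D[h*]) = inf_{C ∈ C_D} ψ(C). -/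
lemma frob_eq_trace {n : ℕ} (A B : Matrix (Fin n) (Fin n) ℝ) :
    frob A B = Matrix.trace (A.transpose * B) := by
  simp only [frob, Matrix.trace, Matrix.diag, Matrix.mul_apply, Matrix.transpose_apply]
  rw [Finset.sum_comm]

lemma frob_mul {n : ℕ} (M A C : Matrix (Fin n) (Fin n) ℝ) :
    frob (M * A) C = frob A (M.transpose * C) := by
  rw [frob_eq_trace, frob_eq_trace, Matrix.transpose_mul, Matrix.mul_assoc]

/-- For a ratio-of-linear performance measure `ψ(C) = ⟨A,C⟩/⟨B,C⟩`, the noise-corrected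
measure `ψ̃ = ψ ∘ T⁻¹` is again ratio-of-linear with positive denominator on the noisy
feasible set, and any classifier Bayes optimal for `ψ̃` w.r.t. the noisy distribution
is Bayes optimal for `ψ` w.r.t. the clean distribution. -/
theorem noise_corrected_ratio_of_linear
    {n : ℕ} {H : Type*} (T A B : Matrix (Fin n) (Fin n) ℝ)
    (hT : IsUnit T.det)
    (hTnn : ∀ i j, 0 ≤ T i j ∧ T i j ≤ 1) (hTcol : ∀ j, ∑ i, T i j = 1)
    (Cclean Cnoisy : H → Matrix (Fin n) (Fin n) ℝ)
    (hrel : ∀ h, Cnoisy h = T * Cclean h)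
    (ψ : Matrix (Fin n) (Fin n) ℝ → ℝ) (hψ : ∀ C, ψ C = frob A C / frob B C)
    (hpos : ∀ C ∈ Set.range Cclean, 0 < frob B C)
    (ψt : Matrix (Fin n) (Fin n) ℝ → ℝ) (hψt : ∀ Ct, ψt Ct = ψ (T⁻¹ * Ct))
    (hstar : H)
    (hopt : ψt (Cnoisy hstar) = sInf (ψt '' Set.range Cnoisy)) :
    (∀ Ct ∈ Set.range Cnoisy,
        0 < frob ((T.transpose)⁻¹ * B) Ct ∧
        ψt Ct = frob ((T.transpose)⁻¹ * A) Ct / frob ((T.transpose)⁻¹ * B) Ct) ∧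
      ψ (Cclean hstar) = sInf (ψ '' Set.range Cclean) := by
  have hTt : ((T.transpose)⁻¹).transpose = T⁻¹ := by
    rw [← Matrix.transpose_nonsing_inv, Matrix.transpose_transpose]
  have hcancel : ∀ h, T⁻¹ * Cnoisy h = Cclean h := fun h => by
    rw [hrel h, ← Matrix.mul_assoc, Matrix.nonsing_inv_mul T hT, Matrix.one_mul]
  have hfrobA : ∀ Ct, frob ((T.transpose)⁻¹ * A) Ct = frob A (T⁻¹ * Ct) := fun Ct => by
    rw [frob_mul, hTt]
  have hfrobB : ∀ Ct, frob ((T.transpose)⁻¹ * B) Ct = frob B (T⁻¹ * Ct) := fun Ct => by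
    rw [frob_mul, hTt]
  have hψtψ : ∀ h, ψt (Cnoisy h) = ψ (Cclean h) := fun h => by
    rw [hψt, hcancel]
  constructor
  · rintro Ct ⟨h, rfl⟩
    rw [hfrobA, hfrobB, hcancel, hψt, hcancel, hψ]
    exact ⟨hpos _ ⟨h, rfl⟩, rfl⟩
  · have himg : ψt '' Set.range Cnoisy = ψ '' Set.range Cclean := by
      ext x
      constructor
      · rintro ⟨_, ⟨h, rfl⟩, rfl⟩; exact ⟨Cclean h, ⟨h, rfl⟩, (hψtψ h).symm⟩
      · rintro ⟨_, ⟨h, rfl⟩, rfl⟩; exact ⟨Cnoisy h, ⟨h, rfl⟩, hψtψ h⟩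
    rw [← hψtψ, hopt, himg]
end

section
/- Let T and T̂ be invertible n×n matrices, and let C^D, C̃, Ĉ ∈ R^{n×n} with C^D = T^{-1} C̃ and ‖Ĉ‖₁ ≤ 1. Then ‖C^D − T̂^{-1} Ĉ‖_{vec,∞} ≤ n ‖T^{-1}‖₁ · ‖C̃ − Ĉ‖_{vec,∞} + ‖T̂^{-1} − T^{-1}‖₁. -/
/-- Entrywise max norm of a matrix. -/
noncomputable def vecInfNorm {n : ℕ} (M : Matrix (Fin n) (Fin n) ℝ) : ℝ := ⨆ i, ⨆ j, |M i j|

/-- Induced matrix 1-norm (maximum absolute column sum). -/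
noncomputable def onorm1 {n : ℕ} (M : Matrix (Fin n) (Fin n) ℝ) : ℝ := ⨆ j, ∑ i, |M i j|

lemma abs_le_vecInfNorm {n : ℕ} (M : Matrix (Fin n) (Fin n) ℝ) (i j : Fin n) :
    |M i j| ≤ vecInfNorm M := by
  unfold vecInfNorm
  refine le_trans ?_ (le_ciSup (f := fun i => ⨆ j, |M i j|) (Finite.bddAbove_range _) i)
  exact le_ciSup (f := fun j => |M i j|) (Finite.bddAbove_range _) j

lemma vecInfNorm_nonneg {n : ℕ} (hn : 0 < n) (M : Matrix (Fin n) (Fin n) ℝ) :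
    0 ≤ vecInfNorm M := by
  have i : Fin n := ⟨0, hn⟩
  exact le_trans (abs_nonneg _) (abs_le_vecInfNorm M i i)

lemma vecInfNorm_le {n : ℕ} (hn : 0 < n) (M : Matrix (Fin n) (Fin n) ℝ) {c : ℝ}
    (h : ∀ i j, |M i j| ≤ c) : vecInfNorm M ≤ c := by
  have : Nonempty (Fin n) := ⟨⟨0, hn⟩⟩
  exact ciSup_le fun i => ciSup_le fun j => h i j

lemma colsum_le_onorm1 {n : ℕ} (M : Matrix (Fin n) (Fin n) ℝ) (j : Fin n) :
    ∑ i, |M i j| ≤ onorm1 M := by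
  unfold onorm1
  exact le_ciSup (f := fun j => ∑ i, |M i j|) (Finite.bddAbove_range _) j

lemma vecInfNorm_le_onorm1 {n : ℕ} (M : Matrix (Fin n) (Fin n) ℝ) (i j : Fin n) :
    |M i j| ≤ onorm1 M := by
  refine le_trans ?_ (colsum_le_onorm1 M j)
  exact Finset.single_le_sum (f := fun i => |M i j|) (fun k _ => abs_nonneg _)
    (Finset.mem_univ i)

/-- Guarantee for noise-corrected confusion matrix estimation with an estimated
noise matrix `T̂`: if `C^D = T⁻¹ C̃` and `‖Ĉ‖₁ ≤ 1`, then
`‖C^D − T̂⁻¹ Ĉ‖_{vec,∞} ≤ n ‖T⁻¹‖₁ ‖C̃ − Ĉ‖_{vec,∞} + ‖T̂⁻¹ − T⁻¹‖₁`. -/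
theorem noise_corrected_op2_estimated_T
    {n : ℕ} (T That CD Ctilde Chat : Matrix (Fin n) (Fin n) ℝ)
    (hT : IsUnit T.det) (hThat : IsUnit That.det)
    (hCD : CD = T⁻¹ * Ctilde) (hChat : onorm1 Chat ≤ 1) :
    vecInfNorm (CD - That⁻¹ * Chat)
      ≤ (n : ℝ) * onorm1 T⁻¹ * vecInfNorm (Ctilde - Chat) + onorm1 (That⁻¹ - T⁻¹) := by
  rcases Nat.eq_zero_or_pos n with hn | hn
  · subst hn
    simp [vecInfNorm, onorm1, Real.iSup_of_isEmpty]
  set A := T⁻¹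
  set B := A - That⁻¹
  set D := Ctilde - Chat
  have hsplit : CD - That⁻¹ * Chat = A * D + B * Chat := by
    rw [hCD]; simp only [A, B, D]; noncomm_ring
  have hDnn : 0 ≤ vecInfNorm D := vecInfNorm_nonneg hn D
  have hAnn : 0 ≤ vecInfNorm A := vecInfNorm_nonneg hn A
  have honB : onorm1 B = onorm1 (That⁻¹ - A) := by
    simp only [onorm1, B, Matrix.sub_apply]
    congr 1; ext j; congr 1; ext i; rw [abs_sub_comm]
  rw [hsplit, ← honB]
  refine vecInfNorm_le hn _ fun i j => ?_
  have h1 : |(A * D) i j| ≤ (n : ℝ) * onorm1 A * vecInfNorm D := by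
    calc |(A * D) i j| ≤ ∑ k, |A i k| * |D k j| := by
          rw [Matrix.mul_apply]
          exact le_trans (Finset.abs_sum_le_sum_abs _ _)
            (le_of_eq (Finset.sum_congr rfl fun k _ => abs_mul _ _))
      _ ≤ ∑ k : Fin n, onorm1 A * vecInfNorm D := by
          refine Finset.sum_le_sum fun k _ => ?_
          exact mul_le_mul (vecInfNorm_le_onorm1 A i k) (abs_le_vecInfNorm D k j)
            (abs_nonneg _) (le_trans (abs_nonneg _) (vecInfNorm_le_onorm1 A i k))
      _ = (n : ℝ) * onorm1 A * vecInfNorm D := by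
          rw [Finset.sum_const, Finset.card_univ, Fintype.card_fin, nsmul_eq_mul, mul_assoc]
  have h2 : |(B * Chat) i j| ≤ onorm1 B := by
    calc |(B * Chat) i j| ≤ ∑ k, |B i k| * |Chat k j| := by
          rw [Matrix.mul_apply]
          exact le_trans (Finset.abs_sum_le_sum_abs _ _)
            (le_of_eq (Finset.sum_congr rfl fun k _ => abs_mul _ _))
      _ ≤ ∑ k, onorm1 B * |Chat k j| := by
          refine Finset.sum_le_sum fun k _ => ?_
          exact mul_le_mul_of_nonneg_right (vecInfNorm_le_onorm1 B i k) (abs_nonneg _)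
      _ = onorm1 B * ∑ k, |Chat k j| := by rw [Finset.mul_sum]
      _ ≤ onorm1 B * 1 := by
          refine mul_le_mul_of_nonneg_left (le_trans (colsum_le_onorm1 Chat j) hChat) ?_
          exact le_trans (le_trans (abs_nonneg _) (vecInfNorm_le_onorm1 B i j)) (le_refl _)
      _ = onorm1 B := mul_one _
  calc |(A * D + B * Chat) i j| ≤ |(A * D) i j| + |(B * Chat) i j| := abs_add_le _ _
    _ ≤ (n : ℝ) * onorm1 A * vecInfNorm D + onorm1 B := add_le_add h1 h2
end

section
/- Let ψ : R^{n×n} → R be defined on feasible confusion matrices, let T be invertible, and suppose h* is Bayes optimal for ψ̃ := ψ ∘ T^{-1} with respect to the noisy distribution, i.e., ψ̃(C^{D̃}[h*]) = inf_{C̃ ∈ C_{D̃}} ψ̃(C̃). Then the ψ-regret of h* with respect to the clean distribution is zero: ψ(C^D[h*]) − inf_{C ∈ C_D} ψ(C) = 0. -/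
/-- If `h*` is Bayes optimal for the noise-corrected measure `ψ̃ = ψ ∘ T⁻¹` w.r.t. the
noisy distribution, then its `ψ`-regret w.r.t. the clean distribution is zero. -/
theorem noise_corrected_zero_regret
    {n : ℕ} {H : Type*} (T : Matrix (Fin n) (Fin n) ℝ)
    (hT : IsUnit T.det)
    (hTnn : ∀ i j, 0 ≤ T i j ∧ T i j ≤ 1) (hTcol : ∀ j, ∑ i, T i j = 1)
    (Cclean Cnoisy : H → Matrix (Fin n) (Fin n) ℝ)
    (hrel : ∀ h, Cnoisy h = T * Cclean h)
    (ψ : Matrix (Fin n) (Fin n) ℝ → ℝ)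
    (ψt : Matrix (Fin n) (Fin n) ℝ → ℝ) (hψt : ∀ Ct, ψt Ct = ψ (T⁻¹ * Ct))
    (hstar : H)
    (hopt : ψt (Cnoisy hstar) = sInf (ψt '' Set.range Cnoisy)) :
    ψ (Cclean hstar) - sInf (ψ '' Set.range Cclean) = 0 := by
  have key : ∀ h, ψt (Cnoisy h) = ψ (Cclean h) := by
    intro h
    rw [hψt, hrel, ← Matrix.mul_assoc, Matrix.nonsing_inv_mul _ hT, Matrix.one_mul]
  have hfun : ψt ∘ Cnoisy = ψ ∘ Cclean := funext key
  have himg : ψt '' Set.range Cnoisy = ψ '' Set.range Cclean := by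
    rw [← Set.range_comp, ← Set.range_comp, hfun]
  rw [← key, hopt, himg, sub_self]
end
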